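/- For W a symmetric n×n matrix and t_W(K_n) = inf{⟨W,X⟩ : X ⪰ 0, X_{ii} − 2X_{ij} + X_{jj} = 1 for all i≠j}: if 𝟙ᵀW𝟙 > 0 then 2·t_W(K_n) = tr(W) − ‖W𝟙‖²/(𝟙ᵀW𝟙); if W𝟙 = 0 then 2·t_W(K_n) = tr(W); otherwise t_W(K_n) = −∞. -/

import Mathlib

open Matrix

/-- The feasible values `⟨W,X⟩` over Gram matrices of unit-distance representations
of `Kₙ`. -/
def tWSet (n : ℕ) (W : Matrix (Fin n) (Fin n) ℝ) : Set ℝ :=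
  {r : ℝ | ∃ X : Matrix (Fin n) (Fin n) ℝ, X.PosSemidef ∧
    (∀ i j, i ≠ j → X i i - 2 * X i j + X j j = 1) ∧ r = (W * X).trace}

noncomputable def Xmat (n : ℕ) (y : Fin n → ℝ) : Matrix (Fin n) (Fin n) ℝ :=
  fun i j => (y i + y j)/4 + if i = j then 1/2 else 0

lemma Xmat_constraint (n : ℕ) (y : Fin n → ℝ) :
    ∀ i j, i ≠ j → Xmat n y i i - 2 * Xmat n y i j + Xmat n y j j = 1 := by
  intro i j hij
  simp [Xmat, hij]
  ring

lemma Xmat_quadform (n : ℕ) (y x : Fin n → ℝ) :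
    x ⬝ᵥ (Xmat n y *ᵥ x)
      = ((∑ i, y i * x i) * (∑ i, x i) + ∑ i, x i ^ 2) / 2 := by
  have expand : ∀ i j : Fin n, x i * (Xmat n y i j * x j)
      = (y i * x i) * x j / 4 + x i * (y j * x j) / 4
        + (if i = j then x i ^ 2 / 2 else 0) := by
    intro i j; simp only [Xmat]; split_ifs with h
    · subst h; ring
    · ring
  have e1 : (∑ i, y i * x i) * (∑ j, x j)
      = ∑ i, ∑ j, ((y i * x i) * x j) := Finset.sum_mul_sum _ _ _ _
  have e2 : (∑ i, x i) * (∑ j, y j * x j)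
      = ∑ i, ∑ j, (x i * (y j * x j)) := Finset.sum_mul_sum _ _ _ _
  have e3 : ∑ i : Fin n, ∑ j : Fin n, (if i = j then x i ^ 2 / 2 else 0)
      = ∑ i, x i ^ 2 / 2 := by
    exact Finset.sum_congr rfl fun i _ => by simp
  calc x ⬝ᵥ (Xmat n y *ᵥ x) = ∑ i, ∑ j, x i * (Xmat n y i j * x j) := by
        simp [dotProduct, mulVec, Finset.mul_sum]
    _ = ∑ i, ∑ j, ((y i * x i) * x j / 4 + x i * (y j * x j) / 4
          + if i = j then x i ^ 2 / 2 else 0) := by simp only [expand]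
    _ = (∑ i, y i * x i) * (∑ i, x i) / 4 + (∑ i, x i) * (∑ i, y i * x i) / 4
          + (∑ i, x i ^ 2) / 2 := by
        simp only [Finset.sum_add_distrib, ← e1, ← e2, e3, ← Finset.sum_div]
    _ = ((∑ i, y i * x i) * (∑ i, x i) + ∑ i, x i ^ 2) / 2 := by ring

lemma Xmat_posSemidef (n : ℕ) (y : Fin n → ℝ)
    (h : ∀ x : Fin n → ℝ, 0 ≤ (∑ i, y i * x i) * (∑ i, x i) + ∑ i, x i ^ 2) :
    (Xmat n y).PosSemidef := by
  refine posSemidef_iff_dotProduct_mulVec.mpr ⟨?_, ?_⟩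
  · show (Xmat n y)ᴴ = _
    ext i j
    by_cases hij : i = j
    · subst hij; simp [Xmat]
    · simp [Xmat, conjTranspose_apply, hij, Ne.symm hij]
      ring
  · intro x
    show (0:ℝ) ≤ star x ⬝ᵥ (Xmat n y *ᵥ x)
    simp only [star_trivial]
    rw [Xmat_quadform]
    linarith [h x]

lemma Xmat_trace (n : ℕ) (W : Matrix (Fin n) (Fin n) ℝ) (hW : W.IsSymm) (y : Fin n → ℝ) :
    (W * Xmat n y).trace = ((∑ i, (∑ j, W i j) * y i) + W.trace) / 2 := by
  have expand : ∀ i j : Fin n, W i j * Xmat n y j i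
      = W i j * y j / 4 + W i j * y i / 4 + (if j = i then W i j / 2 else 0) := by
    intro i j; simp only [Xmat]; split_ifs <;> ring
  have e1 : ∑ i : Fin n, ∑ j : Fin n, W i j * y j / 4
      = ∑ i : Fin n, (∑ j, W i j) * y i / 4 := by
    rw [Finset.sum_comm]
    refine Finset.sum_congr rfl fun j _ => ?_
    rw [← Finset.sum_div, ← Finset.sum_mul]
    have : ∑ i, W i j = ∑ i, W j i := Finset.sum_congr rfl fun i _ => hW.apply j i
    rw [this]
  have e2 : ∑ i : Fin n, ∑ j : Fin n, W i j * y i / 4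
      = ∑ i : Fin n, (∑ j, W i j) * y i / 4 := by
    refine Finset.sum_congr rfl fun i _ => ?_
    rw [← Finset.sum_div, ← Finset.sum_mul]
  have e3 : ∑ i : Fin n, ∑ j : Fin n, (if j = i then W i j / 2 else 0)
      = ∑ i : Fin n, W i i / 2 := by
    refine Finset.sum_congr rfl fun i _ => ?_
    simp
  calc (W * Xmat n y).trace = ∑ i, ∑ j, W i j * Xmat n y j i := by
        simp [Matrix.trace, Matrix.mul_apply, Matrix.diag]
    _ = ∑ i : Fin n, ∑ j : Fin n, (W i j * y j / 4 + W i j * y i / 4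
          + (if j = i then W i j / 2 else 0)) := by simp only [expand]
    _ = (∑ i : Fin n, (∑ j, W i j) * y i / 4) + (∑ i : Fin n, (∑ j, W i j) * y i / 4)
          + ∑ i : Fin n, W i i / 2 := by
        simp only [Finset.sum_add_distrib, e1, e2, e3]
    _ = ((∑ i, (∑ j, W i j) * y i) + W.trace) / 2 := by
        rw [← Finset.sum_div, ← Finset.sum_div, Matrix.trace]
        simp only [Matrix.diag]
        ring

lemma feasible_eq (n : ℕ) (X : Matrix (Fin n) (Fin n) ℝ)
    (hc : ∀ i j, i ≠ j → X i i - 2 * X i j + X j j = 1) :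
    X = Xmat n (fun k => 2 * X k k - 1) := by
  ext i j
  by_cases h : i = j
  · subst h; simp [Xmat]; ring
  · have := hc i j h
    simp only [Xmat, h, if_false]
    linarith

lemma mem_tWSet_elim {n : ℕ} {W : Matrix (Fin n) (Fin n) ℝ} (hW : W.IsSymm) {r : ℝ}
    (hr : r ∈ tWSet n W) :
    ∃ y : Fin n → ℝ,
      (∀ x : Fin n → ℝ, 0 ≤ (∑ i, y i * x i) * (∑ i, x i) + ∑ i, x i ^ 2) ∧
      r = ((∑ i, (∑ j, W i j) * y i) + W.trace) / 2 := by
  obtain ⟨X, hX, hc, rfl⟩ := hr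
  refine ⟨fun k => 2 * X k k - 1, ?_, ?_⟩
  · intro x
    have h0 := hX.dotProduct_mulVec_nonneg x
    rw [star_trivial, feasible_eq n X hc, Xmat_quadform] at h0
    linarith
  · conv_lhs => rw [feasible_eq n X hc]
    rw [Xmat_trace n W hW]

lemma mem_tWSet_intro {n : ℕ} {W : Matrix (Fin n) (Fin n) ℝ} (hW : W.IsSymm) (y : Fin n → ℝ)
    (h : ∀ x : Fin n → ℝ, 0 ≤ (∑ i, y i * x i) * (∑ i, x i) + ∑ i, x i ^ 2) :
    ((∑ i, (∑ j, W i j) * y i) + W.trace) / 2 ∈ tWSet n W :=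
  ⟨Xmat n y, Xmat_posSemidef n y h, Xmat_constraint n y, (Xmat_trace n W hW y).symm⟩

/-- The value of `t_W(Kₙ)`: if `𝟙ᵀW𝟙 > 0` then `2 t_W(Kₙ) = tr W − ‖W𝟙‖²/(𝟙ᵀW𝟙)`;
if `W𝟙 = 0` then `2 t_W(Kₙ) = tr W`; otherwise `t_W(Kₙ) = −∞` (the set is unbounded
below). -/
theorem tW_completeGraph (n : ℕ) (W : Matrix (Fin n) (Fin n) ℝ) (hW : W.IsSymm) :
    (0 < ∑ i, ∑ j, W i j →
      2 * sInf (tWSet n W)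
        = W.trace - (∑ i, (∑ j, W i j) ^ 2) / (∑ i, ∑ j, W i j)) ∧
    (W *ᵥ (fun _ => (1 : ℝ)) = 0 → 2 * sInf (tWSet n W) = W.trace) ∧
    (¬ (0 < ∑ i, ∑ j, W i j) → W *ᵥ (fun _ => (1 : ℝ)) ≠ 0 →
      ¬ BddBelow (tWSet n W)) := by
  refine ⟨?_, ?_, ?_⟩
  · -- case S > 0
    intro hS
    set S : ℝ := ∑ i, ∑ j, W i j with hS_def
    set A : ℝ := ∑ i, (∑ j, W i j) ^ 2 with hA_def
    have hA : 0 < A := by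
      by_contra h
      push_neg at h
      have h0 : A = 0 := le_antisymm h (Finset.sum_nonneg fun i _ => sq_nonneg _)
      have hz := (Finset.sum_eq_zero_iff_of_nonneg
        (fun (i : Fin n) _ => sq_nonneg (∑ j, W i j))).mp h0
      have : S = 0 := Finset.sum_eq_zero fun i _ =>
        sq_eq_zero_iff.mp (hz i (Finset.mem_univ i))
      linarith
    have hlb : ∀ r ∈ tWSet n W, (W.trace - A / S) / 2 ≤ r := by
      intro r hr
      obtain ⟨y, hq, rfl⟩ := mem_tWSet_elim hW hr
      have h0 := hq (fun i => ∑ j, W i j)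
      have hyw : (∑ i, y i * (∑ j, W i j)) = ∑ i, (∑ j, W i j) * y i :=
        Finset.sum_congr rfl fun i _ => mul_comm _ _
      rw [hyw] at h0
      have hAS : A / S * S = A := div_mul_cancel₀ _ (ne_of_gt hS)
      nlinarith [h0, hS, hAS]
    have hmem : (W.trace - A / S) / 2 ∈ tWSet n W := by
      have hval : (∑ i, (∑ j, W i j) * ((A - 2 * S * (∑ j, W i j)) / S ^ 2))
          = - (A / S) := by
        have : ∀ i : Fin n, (∑ j, W i j) * ((A - 2 * S * (∑ j, W i j)) / S ^ 2)
            = (A * (∑ j, W i j) - 2 * S * (∑ j, W i j) ^ 2) / S ^ 2 := by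
          intro i; ring
        rw [Finset.sum_congr rfl fun i _ => this i, ← Finset.sum_div]
        rw [Finset.sum_sub_distrib, ← Finset.mul_sum, ← Finset.mul_sum]
        rw [← hS_def, ← hA_def]
        field_simp
        ring
      have hpsd : ∀ x : Fin n → ℝ,
          0 ≤ (∑ i, ((A - 2 * S * (∑ j, W i j)) / S ^ 2) * x i) * (∑ i, x i)
              + ∑ i, x i ^ 2 := by
        intro x
        have hb2 : (∑ i, (∑ j, W i j) * x i) ^ 2 ≤ A * ∑ i, x i ^ 2 := by
          have := Finset.sum_mul_sq_le_sq_mul_sq Finset.univ (fun i => ∑ j, W i j) x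
          simpa [hA_def] using this
        have hsum : (∑ i, ((A - 2 * S * (∑ j, W i j)) / S ^ 2) * x i)
            = (A * (∑ i, x i) - 2 * S * (∑ i, (∑ j, W i j) * x i)) / S ^ 2 := by
          have : ∀ i : Fin n, ((A - 2 * S * (∑ j, W i j)) / S ^ 2) * x i
              = (A * x i - 2 * S * ((∑ j, W i j) * x i)) / S ^ 2 := by
            intro i; ring
          rw [Finset.sum_congr rfl fun i _ => this i, ← Finset.sum_div,
            Finset.sum_sub_distrib, ← Finset.mul_sum, ← Finset.mul_sum]
        rw [hsum]
        set a : ℝ := ∑ i, x i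
        set b : ℝ := ∑ i, (∑ j, W i j) * x i
        set X : ℝ := ∑ i, x i ^ 2
        have hS2 : (0:ℝ) < S ^ 2 := by positivity
        set D : ℝ := (A * a - 2 * S * b) / S ^ 2 with hD_def
        have hdiv : D * S ^ 2 = A * a - 2 * S * b :=
          div_mul_cancel₀ _ (ne_of_gt hS2)
        have key : A * S ^ 2 * (D * a + X)
            = (A * a - S * b) ^ 2 + S ^ 2 * (A * X - b ^ 2) := by
          linear_combination (A * a) * hdiv
        nlinarith [key, sq_nonneg (A * a - S * b), hb2, hA, hS2,
          mul_pos hA hS2, mul_le_mul_of_nonneg_left hb2 hS2.le]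
      have := mem_tWSet_intro hW (fun i => (A - 2 * S * (∑ j, W i j)) / S ^ 2) hpsd
      rw [hval] at this
      have heq : (-(A / S) + W.trace) / 2 = (W.trace - A / S) / 2 := by ring
      rwa [heq] at this
    have hInf : sInf (tWSet n W) = (W.trace - A / S) / 2 :=
      le_antisymm (csInf_le ⟨(W.trace - A / S) / 2, hlb⟩ hmem)
        (le_csInf ⟨_, hmem⟩ hlb)
    rw [hInf]; ring
  · -- case W𝟙 = 0
    intro hw
    have hwi : ∀ i, (∑ j, W i j) = 0 := by
      intro i
      have := congrFun hw i
      simpa [mulVec, dotProduct] using this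
    have hset : tWSet n W = {W.trace / 2} := by
      ext r
      constructor
      · intro hr
        obtain ⟨y, _, rfl⟩ := mem_tWSet_elim hW hr
        simp [hwi]
      · rintro rfl
        have h0 : ∀ x : Fin n → ℝ,
            0 ≤ (∑ i, (0:ℝ) * x i) * (∑ i, x i) + ∑ i, x i ^ 2 := by
          intro x
          simp only [zero_mul, Finset.sum_const_zero, zero_mul, zero_add]
          positivity
        have := mem_tWSet_intro hW (fun _ => (0:ℝ)) h0
        simpa [hwi] using this
    rw [hset, csInf_singleton]; ring
  · -- case unbounded below
    intro hS hw
    set S : ℝ := ∑ i, ∑ j, W i j with hS_def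
    set A : ℝ := ∑ i, (∑ j, W i j) ^ 2 with hA_def
    have hS' : S ≤ 0 := not_lt.mp hS
    have hA : 0 < A := by
      obtain ⟨i, hi⟩ := Function.ne_iff.mp hw
      have hi' : (∑ j, W i j) ≠ 0 := by
        simpa [mulVec, dotProduct] using hi
      calc (0:ℝ) < (∑ j, W i j) ^ 2 := by positivity
        _ ≤ A := Finset.single_le_sum (fun i _ => sq_nonneg (∑ j, W i j))
            (Finset.mem_univ i)
    set u : ℝ := Real.sqrt A with hu_def
    have hu : 0 < u := Real.sqrt_pos.mpr hA
    have hu2 : u ^ 2 = A := Real.sq_sqrt hA.le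
    rintro ⟨c, hc⟩
    set v : ℝ := max ((W.trace - 2 * c) / (2 * u)) 0 + 1 with hv_def
    have hv0 : 0 ≤ v := by positivity
    set t : ℝ := v ^ 2 with ht_def
    have ht0 : 0 ≤ t := sq_nonneg v
    set s : ℝ := 2 * v / u with hs_def
    have hsu : s * u = 2 * v := by
      rw [hs_def]; exact div_mul_cancel₀ _ hu.ne'
    -- the feasible point
    have hpsd : ∀ x : Fin n → ℝ,
        0 ≤ (∑ i, (t - s * (∑ j, W i j)) * x i) * (∑ i, x i) + ∑ i, x i ^ 2 := by
      intro x
      have hb2 : (∑ i, (∑ j, W i j) * x i) ^ 2 ≤ A * ∑ i, x i ^ 2 := by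
        have := Finset.sum_mul_sq_le_sq_mul_sq Finset.univ (fun i => ∑ j, W i j) x
        simpa [hA_def] using this
      have hsum : (∑ i, (t - s * (∑ j, W i j)) * x i)
          = t * (∑ i, x i) - s * (∑ i, (∑ j, W i j) * x i) := by
        have : ∀ i : Fin n, (t - s * (∑ j, W i j)) * x i
            = t * x i - s * ((∑ j, W i j) * x i) := by intro i; ring
        rw [Finset.sum_congr rfl fun i _ => this i, Finset.sum_sub_distrib,
          ← Finset.mul_sum, ← Finset.mul_sum]
      rw [hsum]
      set a : ℝ := ∑ i, x i
      set b : ℝ := ∑ i, (∑ j, W i j) * x i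
      set X : ℝ := ∑ i, x i ^ 2
      have hb2' : b ^ 2 ≤ A * X := hb2
      have key : u ^ 2 * ((t * a - s * b) * a + X)
          = (u * v * a - b) ^ 2 + (A * X - b ^ 2) := by
        have h2 : v ^ 2 = t := rfl
        linear_combination (-(u ^ 2 * a ^ 2)) * h2 + (-(u * a * b)) * hsu + X * hu2
      nlinarith [key, sq_nonneg (u * v * a - b), hb2', pow_pos hu 2]
    have hval : (∑ i, (∑ j, W i j) * (t - s * (∑ j, W i j))) = t * S - s * A := by
      have : ∀ i : Fin n, (∑ j, W i j) * (t - s * (∑ j, W i j))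
          = t * (∑ j, W i j) - s * (∑ j, W i j) ^ 2 := by intro i; ring
      rw [Finset.sum_congr rfl fun i _ => this i, Finset.sum_sub_distrib,
        ← Finset.mul_sum, ← Finset.mul_sum, ← hS_def, ← hA_def]
    have hmem := mem_tWSet_intro hW (fun i => t - s * (∑ j, W i j)) hpsd
    rw [hval] at hmem
    have hcle := hc hmem
    -- now derive contradiction
    have hsA : s * A = 2 * v * u := by
      rw [← hu2]; field_simp [hs_def]; linarith [hsu]
    have htS : t * S ≤ 0 := mul_nonpos_of_nonneg_of_nonpos ht0 hS'
    have hvbig : (W.trace - 2 * c) / (2 * u) < v := by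
      rw [hv_def]
      have := le_max_left ((W.trace - 2 * c) / (2 * u)) 0
      linarith
    have hvu : W.trace - 2 * c < 2 * v * u := by
      have h1 : (W.trace - 2 * c) / (2 * u) * (2 * u) < v * (2 * u) :=
        mul_lt_mul_of_pos_right hvbig (by positivity)
      rw [div_mul_cancel₀ _ (by positivity : (2:ℝ) * u ≠ 0)] at h1
      linarith
    linarith
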